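/- Let k > 0 and x > 0 be fixed. Then the function ν ↦ 𝓘^k_ν(x) is log-convex on (−k, ∞); that is, for all ν₁, ν₂ > −k and all α ∈ [0,1], 𝓘^k_{αν₁ + (1−α)ν₂}(x) ≤ (𝓘^k_{ν₁}(x))^α · (𝓘^k_{ν₂}(x))^{1−α}. -/

import Mathlib

open Real

/-- The k-gamma function, `Γ_k(x) = k^(x/k - 1) * Γ(x/k)`. -/
noncomputable def kGamma (k x : ℝ) : ℝ := k ^ (x / k - 1) * Real.Gamma (x / k)

/-- The normalized modified k-Bessel function `𝓘^k_ν(x) = Σ f_r(ν) x^(2r)`. -/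
noncomputable def kBesselI (k ν x : ℝ) : ℝ :=
  ∑' r : ℕ, kGamma k (ν + k) / (kGamma k (r * k + ν + k) * 4 ^ r * (r.factorial : ℝ)) *
    x ^ (2 * r)

namespace KBesselAux

lemma Gamma_nat_add {t : ℝ} (ht : 0 < t) (r : ℕ) :
    Real.Gamma (r + t) = (∏ j ∈ Finset.range r, (t + j)) * Real.Gamma t := by
  induction r with
  | zero => simp
  | succ n ih =>
    have h1 : ((n : ℝ) + 1) + t = ((n : ℝ) + t) + 1 := by ring
    have hne : (n : ℝ) + t ≠ 0 := by positivity
    rw [Nat.cast_succ, h1, Real.Gamma_add_one hne, ih, Finset.prod_range_succ]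
    ring

/-- The `r`-th term of the series. -/
noncomputable def term (k ν x : ℝ) (r : ℕ) : ℝ :=
  kGamma k (ν + k) / (kGamma k (r * k + ν + k) * 4 ^ r * (r.factorial : ℝ)) * x ^ (2 * r)

lemma convex_pos {α a b : ℝ} (hα₀ : 0 ≤ α) (hα₁ : α ≤ 1) (ha : 0 < a) (hb : 0 < b) :
    0 < α * a + (1 - α) * b := by
  rcases le_total a b with h | h
  · nlinarith [mul_nonneg (by linarith : (0:ℝ) ≤ 1 - α) (by linarith : (0:ℝ) ≤ b - a)]
  · nlinarith [mul_nonneg hα₀ (by linarith : (0:ℝ) ≤ a - b)]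

lemma term_eq {k ν : ℝ} (hk : 0 < k) (hν : -k < ν) (x : ℝ) (r : ℕ) :
    term k ν x r = (x ^ 2 / (4 * k)) ^ r / (r.factorial : ℝ) *
      (∏ j ∈ Finset.range r, ((ν + k) / k + j))⁻¹ := by
  have ht : 0 < (ν + k) / k := div_pos (by linarith) hk
  have h1 : ((r : ℝ) * k + ν + k) / k = r + (ν + k) / k := by field_simp; ring
  unfold term kGamma
  rw [h1, Gamma_nat_add ht r]
  set t := (ν + k) / k with htdef
  have hsplit : k ^ ((r : ℝ) + t - 1) = (k : ℝ) ^ (r : ℕ) * k ^ (t - 1) := by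
    rw [← Real.rpow_natCast k r, ← Real.rpow_add hk]; ring_nf
  rw [hsplit, pow_mul]
  have hG : (0:ℝ) < k ^ (t - 1) * Real.Gamma t :=
    mul_pos (Real.rpow_pos_of_pos hk _) (Real.Gamma_pos_of_pos ht)
  have hprod : (0:ℝ) < ∏ j ∈ Finset.range r, (t + j) :=
    Finset.prod_pos fun j _ => by positivity
  have hden : (k : ℝ) ^ (r : ℕ) * k ^ (t - 1) * ((∏ j ∈ Finset.range r, (t + j)) * Real.Gamma t)
        * 4 ^ r * (r.factorial : ℝ)
      = (k ^ (t - 1) * Real.Gamma t) *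
        ((k : ℝ) ^ (r : ℕ) * (∏ j ∈ Finset.range r, (t + j)) * 4 ^ r * (r.factorial : ℝ)) := by
    ring
  rw [hden, div_mul_eq_div_div, div_self hG.ne']
  have hfac : ((r.factorial : ℝ)) ≠ 0 := Nat.cast_ne_zero.mpr (Nat.factorial_ne_zero r)
  field_simp
  rw [div_pow, mul_pow]
  field_simp

lemma term_pos {k ν : ℝ} (hk : 0 < k) (hν : -k < ν) {x : ℝ} (hx : 0 < x) (r : ℕ) :
    0 < term k ν x r := by
  rw [term_eq hk hν x r]
  have h1 : (0:ℝ) < (x ^ 2 / (4 * k)) ^ r := by positivity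
  have h2 : (0:ℝ) < ∏ j ∈ Finset.range r, ((ν + k) / k + j) :=
    Finset.prod_pos fun j _ => by
      have : 0 < (ν + k) / k := div_pos (by linarith) hk
      positivity
  positivity

lemma term_summable {k ν : ℝ} (hk : 0 < k) (hν : -k < ν) (x : ℝ) :
    Summable (term k ν x) := by
  set t := (ν + k) / k with htdef
  have ht : 0 < t := div_pos (by linarith) hk
  set M := max 1 t⁻¹ with hM
  have hbd : ∀ r : ℕ, ‖term k ν x r‖ ≤ M * (|x ^ 2 / (4 * k)| ^ r / (r.factorial : ℝ)) := by
    intro r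
    rw [term_eq hk hν x r]
    have hprod : (0:ℝ) < ∏ j ∈ Finset.range r, (t + j) :=
      Finset.prod_pos fun j _ => by positivity
    rw [norm_mul, norm_inv, Real.norm_eq_abs, Real.norm_eq_abs, abs_of_pos hprod,
      abs_div, abs_pow, Nat.abs_cast]
    rw [mul_comm M _]
    apply mul_le_mul_of_nonneg_left _ (by positivity)
    -- (∏ ...)⁻¹ ≤ M
    rcases Nat.eq_zero_or_pos r with hr | hr
    · subst hr; simp [hM]
    · have hge : ∀ n : ℕ, t ≤ ∏ j ∈ Finset.range (n + 1), (t + j) := by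
        intro n
        induction n with
        | zero => simp
        | succ m ih =>
          rw [Finset.prod_range_succ]
          have hp : (0:ℝ) < ∏ j ∈ Finset.range (m + 1), (t + j) :=
            Finset.prod_pos fun j _ => by positivity
          push_cast
          nlinarith [mul_nonneg hp.le (by positivity : (0:ℝ) ≤ t + (m:ℝ)), ih]
      obtain ⟨n, rfl⟩ := Nat.exists_eq_succ_of_ne_zero (Nat.pos_iff_ne_zero.mp hr)
      calc (∏ j ∈ Finset.range (n + 1), (t + j))⁻¹ ≤ t⁻¹ := by
            apply inv_anti₀ ht (hge n)
        _ ≤ M := le_max_right _ _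
  apply Summable.of_norm_bounded _ hbd
  exact (Real.summable_pow_div_factorial _).mul_left M

lemma kBesselI_eq (k ν x : ℝ) : kBesselI k ν x = ∑' r : ℕ, term k ν x r := rfl

/-- Termwise log-convexity. -/
lemma term_logConvex {k ν₁ ν₂ : ℝ} (hk : 0 < k) (hν₁ : -k < ν₁) (hν₂ : -k < ν₂)
    {x : ℝ} (hx : 0 < x) {α : ℝ} (hα₀ : 0 ≤ α) (hα₁ : α ≤ 1) (r : ℕ) :
    term k (α * ν₁ + (1 - α) * ν₂) x r ≤
      term k ν₁ x r ^ α * term k ν₂ x r ^ (1 - α) := by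
  set t₁ := (ν₁ + k) / k with ht₁def
  set t₂ := (ν₂ + k) / k with ht₂def
  have ht₁ : 0 < t₁ := div_pos (by linarith) hk
  have ht₂ : 0 < t₂ := div_pos (by linarith) hk
  have hνm : -k < α * ν₁ + (1 - α) * ν₂ := by
    have h := convex_pos hα₀ hα₁ (by linarith : (0:ℝ) < ν₁ + k) (by linarith : (0:ℝ) < ν₂ + k)
    have h2 : α * (ν₁ + k) + (1 - α) * (ν₂ + k) = α * ν₁ + (1 - α) * ν₂ + k := by ring
    linarith
  have htm : (α * ν₁ + (1 - α) * ν₂ + k) / k = α * t₁ + (1 - α) * t₂ := by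
    field_simp [ht₁def, ht₂def]; rw [ht₁def, ht₂def]; field_simp; ring
  rw [term_eq hk hν₁ x r, term_eq hk hν₂ x r, term_eq hk hνm x r, htm]
  set C := (x ^ 2 / (4 * k)) ^ r / (r.factorial : ℝ) with hC
  have hCpos : 0 < C := by positivity
  set P₁ := ∏ j ∈ Finset.range r, (t₁ + j) with hP₁
  set P₂ := ∏ j ∈ Finset.range r, (t₂ + j) with hP₂
  have hP₁pos : 0 < P₁ := Finset.prod_pos fun j _ => by positivity
  have hP₂pos : 0 < P₂ := Finset.prod_pos fun j _ => by positivity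
  have key : P₁ ^ α * P₂ ^ (1 - α) ≤ ∏ j ∈ Finset.range r, (α * t₁ + (1 - α) * t₂ + j) := by
    rw [hP₁, hP₂, ← Real.finset_prod_rpow _ _ (fun j _ => by positivity) α,
      ← Real.finset_prod_rpow _ _ (fun j _ => by positivity) (1 - α),
      ← Finset.prod_mul_distrib]
    apply Finset.prod_le_prod
    · intro j _
      have h1 : (0:ℝ) ≤ (t₁ + j) ^ α := Real.rpow_nonneg (by positivity) _
      have h2 : (0:ℝ) ≤ (t₂ + j) ^ (1 - α) := Real.rpow_nonneg (by positivity) _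
      positivity
    · intro j _
      have := Real.geom_mean_le_arith_mean2_weighted hα₀ (by linarith : (0:ℝ) ≤ 1 - α)
        (by positivity : (0:ℝ) ≤ t₁ + j) (by positivity : (0:ℝ) ≤ t₂ + j)
        (by ring : α + (1 - α) = 1)
      calc (t₁ + (j:ℝ)) ^ α * (t₂ + j) ^ (1 - α) ≤ α * (t₁ + j) + (1 - α) * (t₂ + j) := this
        _ = α * t₁ + (1 - α) * t₂ + j := by ring
  have hPm : 0 < ∏ j ∈ Finset.range r, (α * t₁ + (1 - α) * t₂ + j) :=
    Finset.prod_pos fun j _ => by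
      have h := convex_pos hα₀ hα₁ (by positivity : (0:ℝ) < t₁ + j) (by positivity : (0:ℝ) < t₂ + j)
      have h2 : α * (t₁ + j) + (1 - α) * (t₂ + j) = α * t₁ + (1 - α) * t₂ + j := by ring
      linarith
  have h1 : (∏ j ∈ Finset.range r, (α * t₁ + (1 - α) * t₂ + j))⁻¹ ≤
      (P₁ ^ α * P₂ ^ (1 - α))⁻¹ := by
    apply inv_anti₀ _ key
    have := Real.rpow_pos_of_pos hP₁pos α
    have := Real.rpow_pos_of_pos hP₂pos (1 - α)
    positivity
  calc C * (∏ j ∈ Finset.range r, (α * t₁ + (1 - α) * t₂ + j))⁻¹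
      ≤ C * (P₁ ^ α * P₂ ^ (1 - α))⁻¹ := by
        exact mul_le_mul_of_nonneg_left h1 hCpos.le
    _ = (C * P₁⁻¹) ^ α * (C * P₂⁻¹) ^ (1 - α) := by
        have hCsplit : C = C ^ α * C ^ (1 - α) := by
          rw [← Real.rpow_add hCpos]; norm_num
        rw [Real.mul_rpow hCpos.le (inv_nonneg.mpr hP₁pos.le),
          Real.mul_rpow hCpos.le (inv_nonneg.mpr hP₂pos.le),
          Real.inv_rpow hP₁pos.le, Real.inv_rpow hP₂pos.le, mul_inv]
        nth_rewrite 1 [hCsplit]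
        ring

end KBesselAux

theorem kBesselI_logConvex_in_order (k : ℝ) (hk : 0 < k) (x : ℝ) (hx : 0 < x)
    (ν₁ ν₂ : ℝ) (hν₁ : -k < ν₁) (hν₂ : -k < ν₂) (α : ℝ) (hα₀ : 0 ≤ α) (hα₁ : α ≤ 1) :
    kBesselI k (α * ν₁ + (1 - α) * ν₂) x ≤
      kBesselI k ν₁ x ^ α * kBesselI k ν₂ x ^ (1 - α) := by
  open KBesselAux in
  rcases eq_or_lt_of_le hα₀ with h0 | h0
  · subst h0
    simp [Real.rpow_zero, Real.rpow_one]
  rcases eq_or_lt_of_le hα₁ with h1 | h1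
  · subst h1
    simp [Real.rpow_zero, Real.rpow_one]
  -- 0 < α < 1
  have hνm : -k < α * ν₁ + (1 - α) * ν₂ := by
    have h := KBesselAux.convex_pos hα₀ hα₁ (by linarith : (0:ℝ) < ν₁ + k)
      (by linarith : (0:ℝ) < ν₂ + k)
    have h2 : α * (ν₁ + k) + (1 - α) * (ν₂ + k) = α * ν₁ + (1 - α) * ν₂ + k := by ring
    linarith
  have ha : KBesselAux.term k ν₁ x = fun r => KBesselAux.term k ν₁ x r := rfl
  set a := KBesselAux.term k ν₁ x with haa
  set b := KBesselAux.term k ν₂ x with hbb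
  have hapos : ∀ r, 0 ≤ a r := fun r => (KBesselAux.term_pos hk hν₁ hx r).le
  have hbpos : ∀ r, 0 ≤ b r := fun r => (KBesselAux.term_pos hk hν₂ hx r).le
  have hasum : Summable a := KBesselAux.term_summable hk hν₁ x
  have hbsum : Summable b := KBesselAux.term_summable hk hν₂ x
  have hcsum : Summable (KBesselAux.term k (α * ν₁ + (1 - α) * ν₂) x) :=
    KBesselAux.term_summable hk hνm x
  set p : ℝ := 1 / α with hp
  set q : ℝ := 1 / (1 - α) with hq
  have hα1' : 0 < 1 - α := by linarith
  have hpq : p.HolderConjugate q := by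
    rw [Real.holderConjugate_iff]
    constructor
    · rw [hp]
      rw [lt_div_iff₀ h0]; linarith
    · rw [hp, hq]
      field_simp
      ring
  have hfp : ∀ r, (a r ^ α) ^ p = a r := fun r => by
    rw [← Real.rpow_mul (hapos r), hp, mul_one_div, div_self h0.ne', Real.rpow_one]
  have hgq : ∀ r, (b r ^ (1 - α)) ^ q = b r := fun r => by
    rw [← Real.rpow_mul (hbpos r), hq, mul_one_div, div_self hα1'.ne', Real.rpow_one]
  have hsum_fp : Summable fun r => (a r ^ α) ^ p := by
    rw [show (fun r => (a r ^ α) ^ p) = a from funext hfp]; exact hasum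
  have hsum_gq : Summable fun r => (b r ^ (1 - α)) ^ q := by
    rw [show (fun r => (b r ^ (1 - α)) ^ q) = b from funext hgq]; exact hbsum
  have holder := inner_le_Lp_mul_Lq_tsum_of_nonneg hpq
    (fun r => Real.rpow_nonneg (hapos r) α)
    (fun r => Real.rpow_nonneg (hbpos r) (1 - α)) hsum_fp hsum_gq
  have hterm : ∀ r, KBesselAux.term k (α * ν₁ + (1 - α) * ν₂) x r ≤ a r ^ α * b r ^ (1 - α) :=
    fun r => KBesselAux.term_logConvex hk hν₁ hν₂ hx hα₀ hα₁ r
  have step1 : kBesselI k (α * ν₁ + (1 - α) * ν₂) x ≤ ∑' r, a r ^ α * b r ^ (1 - α) := by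
    rw [KBesselAux.kBesselI_eq]
    exact Summable.tsum_le_tsum hterm hcsum (summable_mul_of_Lp_Lq_of_nonneg hpq (fun r => Real.rpow_nonneg (hapos r) α) (fun r => Real.rpow_nonneg (hbpos r) (1 - α)) hsum_fp hsum_gq)
  have step2 : (∑' r, a r ^ α * b r ^ (1 - α)) ≤
      kBesselI k ν₁ x ^ α * kBesselI k ν₂ x ^ (1 - α) := by
    have := holder
    rw [show (fun r => (a r ^ α) ^ p) = a from funext hfp,
      show (fun r => (b r ^ (1 - α)) ^ q) = b from funext hgq] at this
    rw [KBesselAux.kBesselI_eq, KBesselAux.kBesselI_eq]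
    rw [hp, hq, one_div_one_div, one_div_one_div] at this
    exact this
  linarith
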